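/- Let D_{m,ψ,φ} be bounded and J_w-symmetric on H²(β) with ψ not identically zero. If ψ^{(m)}(0) ∈ ℝ, φ'(0) ∈ ℝ, and conj(φ(0)) = conj(w) φ(0), then conj(ψ(w·conj(z))) = conj(w)^m ψ(z) and conj(φ(w·conj(z))) = conj(w) φ(z) for all z ∈ 𝔻, and consequently D_{m,ψ,φ} is Hermitian. -/

import Mathlib

open Complex Metric
open scoped InnerProductSpace ComplexConjugate

noncomputable section

/-- `H²(β)` modelled as `ℓ²`: an element `x` represents the analytic function with
Taylor coefficients `aₙ = x n / β n`, so that `‖x‖² = Σ |aₙ|² β(n)²`. -/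
abbrev Hs : Type := lp (fun _ : ℕ => ℂ) 2

/-- The analytic function associated to an element with data `x` (coefficients `x n / β n`). -/
def Fval (β : ℕ → ℝ) (x : ℕ → ℂ) (z : ℂ) : ℂ := ∑' n : ℕ, (x n / (β n : ℂ)) * z ^ n

/-- The conjugation `J_w` at the level of coefficient data: corresponds to
`(J_w f)(z) = conj (f (w * conj z))`, i.e. coefficients `conj aₙ * conj(w)ⁿ`. -/
def Jseq (w : ℂ) (x : ℕ → ℂ) : ℕ → ℂ := fun n => conj (x n) * (conj w) ^ n

/-- Data of the reproducing kernel `K_α(z) = Σ conj(α)ⁿ zⁿ / β(n)²`. -/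
def kerSeq (β : ℕ → ℝ) (α : ℂ) : ℕ → ℂ := fun n => (conj α) ^ n / (β n : ℂ)

/-- Data of the derivative kernel `K_α^{[m]}(z) = Σ_{n≥m} (n!/(n−m)!) conj(α)^{n−m} zⁿ / β(n)²`. -/
def kerDSeq (β : ℕ → ℝ) (m : ℕ) (α : ℂ) : ℕ → ℂ := fun n =>
  if m ≤ n then (n.factorial / (n - m).factorial : ℂ) * (conj α) ^ (n - m) / (β n : ℂ) else 0

/-- Standing assumptions on the weight sequence `β`. -/
def WeightOK (β : ℕ → ℝ) : Prop :=
  (∀ n, 0 < β n) ∧ β 0 = 1 ∧ 1 ≤ Filter.atTop.liminf (fun n : ℕ => (β n) ^ ((1:ℝ)/(n:ℝ)))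

/-- `φ` is an analytic self-map of the unit disc. -/
def SelfMapD (φ : ℂ → ℂ) : Prop :=
  AnalyticOnNhd ℂ φ (ball 0 1) ∧ ∀ z ∈ ball (0:ℂ) 1, φ z ∈ ball (0:ℂ) 1

/-- `T` acts as the generalized weighted composition operator
`D_{m,ψ,φ} f (z) = ψ(z) f^{(m)}(φ(z))` on the disc. -/
def IsGWCO (β : ℕ → ℝ) (m : ℕ) (ψ φ : ℂ → ℂ) (T : Hs →L[ℂ] Hs) : Prop :=
  ∀ (x : Hs), ∀ z ∈ ball (0:ℂ) 1, Fval β (T x) z = ψ z * iteratedDeriv m (Fval β x) (φ z)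

namespace Stmt16Aux

open Filter Finset FormalMultilinearSeries

/-- Taylor coefficient at 0. -/
def acoef (g : ℂ → ℂ) (n : ℕ) : ℂ := (n.factorial : ℂ)⁻¹ * iteratedDeriv n g 0

lemma iteratedDeriv_monomial (c : ℂ) (j : ℕ) (k : ℕ) :
    iteratedDeriv k (fun x : ℂ => c * x ^ j) = fun t => c * (j.descFactorial k : ℂ) * t ^ (j - k) := by
  induction k with
  | zero => simp
  | succ k ih =>
    rw [iteratedDeriv_succ, ih]
    funext t
    rw [deriv_const_mul _ (differentiableAt_pow _)]
    rw [deriv_pow_field]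
    rw [Nat.descFactorial_succ, Nat.sub_sub]
    push_cast
    ring

lemma hasFPower_of_hasSum {c : ℕ → ℂ} {h : ℂ → ℂ}
    (hc : ∀ z ∈ ball (0:ℂ) 1, HasSum (fun n => c n * z ^ n) (h z)) :
    HasFPowerSeriesOnBall h (ofScalars ℂ c) 0 1 := by
  refine ⟨?_, one_pos, ?_⟩
  · refine ENNReal.le_of_forall_nnreal_lt fun r hr => ?_
    have hr1 : (r : ℝ) < 1 := by exact_mod_cast hr
    have hball : ((r : ℝ) : ℂ) ∈ ball (0:ℂ) 1 := by
      simp only [mem_ball_zero_iff, Complex.norm_real]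
      rw [Real.norm_of_nonneg r.coe_nonneg]; exact hr1
    have h0 := ((hc _ hball).summable.tendsto_atTop_zero).norm
    rw [norm_zero] at h0
    have hb : ∀ᶠ n in atTop, ‖ofScalars ℂ c n‖ * (r:ℝ)^n ≤ 1 := by
      filter_upwards [h0.eventually (gt_mem_nhds one_pos)] with n hn
      rw [ofScalars_norm]
      calc ‖c n‖ * (r:ℝ)^n = ‖c n * ((r:ℝ):ℂ)^n‖ := by
            rw [norm_mul, norm_pow, Complex.norm_real, Real.norm_of_nonneg r.coe_nonneg]
        _ ≤ 1 := hn.le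
    exact le_radius_of_eventually_le _ 1 hb
  · intro y hy
    rw [← ENNReal.coe_one, Metric.emetric_ball_nnreal] at hy
    have hy' : y ∈ ball (0:ℂ) 1 := by simpa using hy
    have := hc y hy'
    simp only [zero_add]
    convert this using 1
    rfl
    funext n
    rw [ofScalars_apply_eq, smul_eq_mul]

lemma unique_coeff {c d : ℕ → ℂ} {h : ℂ → ℂ}
    (hc : ∀ z ∈ ball (0:ℂ) 1, HasSum (fun n => c n * z ^ n) (h z))
    (hd : ∀ z ∈ ball (0:ℂ) 1, HasSum (fun n => d n * z ^ n) (h z)) : c = d := by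
  have e := ((hasFPower_of_hasSum hc).hasFPowerSeriesAt).eq_formalMultilinearSeries
    ((hasFPower_of_hasSum hd).hasFPowerSeriesAt)
  funext n
  have h2 := congrArg (fun p : FormalMultilinearSeries ℂ ℂ ℂ => p n (fun _ => (1:ℂ))) e
  simp only [ofScalars_apply_eq, smul_eq_mul, one_pow, mul_one] at h2
  exact h2

lemma taylor_hasSum {g : ℂ → ℂ} (hg : DifferentiableOn ℂ g (ball 0 1)) {z : ℂ}
    (hz : z ∈ ball (0:ℂ) 1) : HasSum (fun n => acoef g n * z ^ n) (g z) := by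
  have := Complex.hasSum_taylorSeries_on_ball hg hz
  simp only [sub_zero, smul_eq_mul] at this
  convert this using 2 with n
  rfl
  unfold acoef; ring

lemma taylor_summable_norm {g : ℂ → ℂ} (hg : DifferentiableOn ℂ g (ball 0 1)) {z : ℂ}
    (hz : z ∈ ball (0:ℂ) 1) : Summable fun n => ‖acoef g n * z ^ n‖ := by
  rw [mem_ball_zero_iff] at hz
  set r : ℝ := (1 + ‖z‖)/2 with hrdef
  clear_value r
  have hzr : ‖z‖ < r := by rw [hrdef]; linarith
  have hr0 : 0 < r := lt_of_le_of_lt (norm_nonneg z) hzr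
  have hr1 : r < 1 := by rw [hrdef]; linarith
  have hball : ((r : ℝ) : ℂ) ∈ ball (0:ℂ) 1 := by
    simp only [mem_ball_zero_iff, Complex.norm_real]
    rw [Real.norm_of_nonneg hr0.le]; exact hr1
  have h0 := ((taylor_hasSum hg hball).summable.tendsto_atTop_zero).norm
  rw [norm_zero] at h0
  have hgeo : Summable fun n : ℕ => (‖z‖ / r) ^ n := by
    apply summable_geometric_of_lt_one (by positivity)
    rw [div_lt_one hr0]; exact hzr
  refine Summable.of_norm_bounded_eventually_nat hgeo ?_
  filter_upwards [h0.eventually (gt_mem_nhds one_pos)] with n hn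
  have hn' : ‖acoef g n‖ * r ^ n ≤ 1 := by
    calc ‖acoef g n‖ * r ^ n = ‖acoef g n * ((r:ℝ):ℂ)^n‖ := by
          rw [norm_mul, norm_pow, Complex.norm_real, Real.norm_of_nonneg hr0.le]
      _ ≤ 1 := hn.le
  have hrn : (‖z‖/r) ^ n * r ^ n = ‖z‖ ^ n := by
    rw [div_pow, div_mul_cancel₀]
    positivity
  rw [norm_norm, norm_mul, norm_pow]
  calc ‖acoef g n‖ * ‖z‖ ^ n = (‖acoef g n‖ * r ^ n) * (‖z‖/r) ^ n := by
        rw [mul_right_comm, mul_assoc, hrn]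
    _ ≤ 1 * (‖z‖/r)^n := by
        apply mul_le_mul_of_nonneg_right hn' (by positivity)
    _ = (‖z‖/r)^n := one_mul _

lemma acoef_mul {g h : ℂ → ℂ} (hg : DifferentiableOn ℂ g (ball 0 1))
    (hh : DifferentiableOn ℂ h (ball 0 1)) :
    acoef (fun z => g z * h z) = fun n => ∑ i ∈ Finset.range (n+1), acoef g i * acoef h (n - i) := by
  refine unique_coeff (h := fun z => g z * h z)
    (fun z hz => taylor_hasSum (hg.mul hh) hz) (fun z hz => ?_)
  have H := hasSum_sum_range_mul_of_summable_norm
    (taylor_summable_norm hg hz) (taylor_summable_norm hh hz)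
  rw [(taylor_hasSum hg hz).tsum_eq, (taylor_hasSum hh hz).tsum_eq] at H
  convert H using 1
  rfl
  funext n
  rw [Finset.sum_mul]
  refine Finset.sum_congr rfl fun i hi => ?_
  have hin : i ≤ n := Nat.lt_succ_iff.mp (Finset.mem_range.mp hi)
  have : z ^ n = z ^ i * z ^ (n - i) := by
    rw [← pow_add, Nat.add_sub_cancel' hin]
  rw [this]; ring

lemma weight_eventually_ge {β : ℕ → ℝ} (hβ : WeightOK β) {r : ℝ} (hr0 : 0 < r) (hr1 : r < 1) :
    ∀ᶠ n in atTop, r ^ n ≤ β n := by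
  obtain ⟨hpos, -, hlim⟩ := hβ
  have hbdd : Filter.IsBoundedUnder (· ≥ ·) atTop (fun n : ℕ => (β n) ^ ((1:ℝ)/(n:ℝ))) :=
    ⟨0, Filter.eventually_map.mpr (Filter.Eventually.of_forall fun n =>
      Real.rpow_nonneg (hpos n).le _)⟩
  have hev : ∀ᶠ n in atTop, r < (β n) ^ ((1:ℝ)/(n:ℝ)) :=
    Filter.eventually_lt_of_lt_liminf (lt_of_lt_of_le hr1 hlim) hbdd
  filter_upwards [hev, Filter.eventually_ge_atTop 1] with n hn hn1
  have hne : (n : ℝ) ≠ 0 := Nat.cast_ne_zero.mpr (by omega)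
  have h1 : ((β n) ^ ((1:ℝ)/(n:ℝ))) ^ (n : ℕ) = β n := by
    rw [← Real.rpow_natCast ((β n) ^ ((1:ℝ)/(n:ℝ))) n, ← Real.rpow_mul (hpos n).le]
    rw [one_div, inv_mul_cancel₀ hne, Real.rpow_one]
  calc r ^ n ≤ ((β n) ^ ((1:ℝ)/(n:ℝ))) ^ n :=
        pow_le_pow_left₀ hr0.le hn.le n
    _ = β n := h1

lemma lp_hasSum {β : ℕ → ℝ} (hβ : WeightOK β) (x : Hs) {z : ℂ} (hz : z ∈ ball (0:ℂ) 1) :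
    HasSum (fun n => ((x : ℕ → ℂ) n / (β n : ℂ)) * z ^ n) (Fval β (x : ℕ → ℂ) z) := by
  rw [mem_ball_zero_iff] at hz
  set r : ℝ := (1 + ‖z‖)/2 with hrdef
  clear_value r
  have hzr : ‖z‖ < r := by rw [hrdef]; linarith [norm_nonneg z]
  have hr0 : 0 < r := lt_of_le_of_lt (norm_nonneg z) hzr
  have hr1 : r < 1 := by rw [hrdef]; linarith [norm_nonneg z]
  have hgeo : Summable fun n : ℕ => ‖x‖ * (‖z‖ / r) ^ n := by
    apply Summable.mul_left
    apply summable_geometric_of_lt_one (by positivity)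
    rw [div_lt_one hr0]; exact hzr
  have hsum : Summable (fun n => ((x : ℕ → ℂ) n / (β n : ℂ)) * z ^ n) := by
    refine Summable.of_norm_bounded_eventually_nat hgeo ?_
    filter_upwards [weight_eventually_ge hβ hr0 hr1] with n hn
    have hβn : 0 < β n := hβ.1 n
    rw [norm_mul, norm_div, norm_pow]
    have h1 : ‖(x : ℕ → ℂ) n‖ ≤ ‖x‖ := lp.norm_apply_le_norm (by norm_num) x n
    have h2 : ‖((β n : ℝ) : ℂ)‖ = β n := by
      rw [Complex.norm_real, Real.norm_of_nonneg hβn.le]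
    rw [h2]
    calc ‖(x : ℕ → ℂ) n‖ / β n * ‖z‖ ^ n ≤ ‖x‖ / r ^ n * ‖z‖ ^ n := by
          apply mul_le_mul_of_nonneg_right _ (by positivity)
          exact div_le_div₀ (norm_nonneg x) h1 (by positivity) hn
      _ = ‖x‖ * (‖z‖ / r) ^ n := by rw [div_pow, div_mul_eq_mul_div, mul_div_assoc]
  exact hsum.hasSum

/-- single basis vector -/
def esgl (j : ℕ) : Hs := lp.single 2 j (1:ℂ)

lemma esgl_apply (j n : ℕ) : (esgl j : ℕ → ℂ) n = if n = j then 1 else 0 := by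
  by_cases h : n = j
  · subst h; simp [esgl, lp.single_apply_self]
  · simp [esgl, lp.single_apply_ne _ _ _ h, h]

lemma inner_esgl_left (n : ℕ) (y : Hs) : ⟪esgl n, y⟫_ℂ = (y : ℕ → ℂ) n := by
  rw [esgl, lp.inner_single_left]
  simp [RCLike.inner_apply]

lemma inner_esgl_right (n : ℕ) (y : Hs) : ⟪y, esgl n⟫_ℂ = conj ((y : ℕ → ℂ) n) := by
  rw [esgl, lp.inner_single_right]
  simp [RCLike.inner_apply]

lemma Fval_esgl (β : ℕ → ℝ) (j : ℕ) :
    Fval β ((esgl j : ℕ → ℂ)) = fun z => ((β j : ℂ))⁻¹ * z ^ j := by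
  funext z
  unfold Fval
  rw [tsum_eq_single j]
  · rw [esgl_apply j j, if_pos rfl, one_div]
  · intro n hn; rw [esgl_apply j n, if_neg hn, zero_div, zero_mul]

end Stmt16Aux

/-- if a `J_w`-symmetric `D_{m,ψ,φ}` has `ψ^{(m)}(0), φ'(0) ∈ ℝ` and
`conj φ(0) = conj w · φ(0)`, then `conj(ψ(w conj z)) = conj(w)^m ψ(z)` and
`conj(φ(w conj z)) = conj w · φ(z)` on `𝔻`, and `D_{m,ψ,φ}` is Hermitian. -/
theorem stmt16 (β : ℕ → ℝ) (hβ : WeightOK β) (m : ℕ) (hm : 1 ≤ m)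
    (w : ℂ) (hw : ‖w‖ = 1)
    (ψ φ : ℂ → ℂ) (hφ : SelfMapD φ) (hψa : AnalyticOnNhd ℂ ψ (ball 0 1))
    (hψ0 : ∃ z ∈ ball (0:ℂ) 1, ψ z ≠ 0)
    (T : Hs →L[ℂ] Hs) (hT : IsGWCO β m ψ φ T)
    (J : Hs → Hs) (hJ : ∀ (x : Hs) (n : ℕ), (J x : ℕ → ℂ) n = Jseq w (x : ℕ → ℂ) n)
    (hsym : ∀ x : Hs, T x = J (ContinuousLinearMap.adjoint T (J x)))
    (hψm : (iteratedDeriv m ψ 0).im = 0) (hφ' : (deriv φ 0).im = 0)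
    (hφ0 : conj (φ 0) = conj w * φ 0) :
    (∀ z ∈ ball (0:ℂ) 1, conj (ψ (w * conj z)) = (conj w) ^ m * ψ z) ∧
    (∀ z ∈ ball (0:ℂ) 1, conj (φ (w * conj z)) = conj w * φ z) ∧
    ContinuousLinearMap.adjoint T = T := by
  classical
  open Stmt16Aux Finset in
  -- basic facts about w
  have hw0 : w ≠ 0 := by
    intro h; rw [h] at hw; simp at hw
  have hww : w * conj w = 1 := by
    rw [Complex.mul_conj]
    norm_cast
    rw [Complex.normSq_eq_norm_sq, hw, one_pow]
  have hwc0 : conj w ≠ 0 := by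
    intro h; rw [h, mul_zero] at hww; exact zero_ne_one hww
  -- differentiability
  have hφd : DifferentiableOn ℂ φ (ball 0 1) := hφ.1.differentiableOn
  have hψd : DifferentiableOn ℂ ψ (ball 0 1) := hψa.differentiableOn
  have hdiffk : ∀ k, DifferentiableOn ℂ (fun z => ψ z * φ z ^ k) (ball 0 1) :=
    fun k => hψd.mul (hφd.pow k)
  -- nonzero constants
  have hβc : ∀ n, (β n : ℂ) ≠ 0 := fun n => by
    exact_mod_cast (hβ.1 n).ne'
  have hdc : ∀ l : ℕ, (((m + l).descFactorial m : ℕ) : ℂ) ≠ 0 := fun l => by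
    rw [Nat.cast_ne_zero]
    rw [Ne, Nat.descFactorial_eq_zero_iff_lt]
    omega
  -- matrix and coefficients
  set M : ℕ → ℕ → ℂ := fun n j => ((T (esgl j)) : ℕ → ℂ) n with hMdef
  set bc : ℕ → ℕ → ℂ := fun k => acoef (fun z => ψ z * φ z ^ k) with hbc
  set fc : ℕ → ℂ := acoef φ with hfc
  set S : Hs →L[ℂ] Hs := ContinuousLinearMap.adjoint T with hS
  -- adjoint columns
  have hSe : ∀ j n, ((S (esgl j)) : ℕ → ℂ) n = conj (M j n) := by
    intro j n
    rw [← inner_esgl_left n (S (esgl j)), hS, ContinuousLinearMap.adjoint_inner_right,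
      inner_esgl_right]
  -- J on basis vectors
  have hJe : ∀ j, J (esgl j) = (conj w)^j • esgl j := by
    intro j
    apply lp.ext
    funext n
    rw [hJ]
    unfold Jseq
    rw [lp.coeFn_smul, Pi.smul_apply, esgl_apply]
    by_cases h : n = j
    · subst h; simp
    · simp [h]
  -- the symmetry relation on matrix entries
  have hMat : ∀ n j, w^n * M n j = w^j * M j n := by
    intro n j
    have h1 : M n j = conj ((conj w)^j * ((S (esgl j)) : ℕ → ℂ) n) * (conj w)^n := by
      calc M n j = ((T (esgl j)) : ℕ → ℂ) n := rfl
        _ = ((J (S (J (esgl j)))) : ℕ → ℂ) n := by rw [← hsym (esgl j)]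
        _ = conj (((S (J (esgl j))) : ℕ → ℂ) n) * (conj w)^n := by rw [hJ]; rfl
        _ = conj ((conj w)^j * ((S (esgl j)) : ℕ → ℂ) n) * (conj w)^n := by
            rw [hJe j, map_smul, lp.coeFn_smul, Pi.smul_apply, smul_eq_mul]
    rw [hSe] at h1
    rw [h1]
    simp only [map_mul, map_pow, Complex.conj_conj]
    have h2 : w^n * (w^j * M j n * (conj w)^n) = (w^n * (conj w)^n) * w^j * M j n := by ring
    rw [h2, ← mul_pow, hww, one_pow, one_mul]
  -- column power series
  have hcol : ∀ j, ∀ z ∈ ball (0:ℂ) 1, HasSum (fun n => (M n j / (β n : ℂ)) * z ^ n)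
      (((j.descFactorial m : ℂ) / (β j : ℂ)) * (ψ z * φ z ^ (j - m))) := by
    intro j z hz
    have h1 := lp_hasSum hβ (T (esgl j)) hz
    have h2 : Fval β ((T (esgl j) : ℕ → ℂ)) z
        = ψ z * iteratedDeriv m (Fval β ((esgl j : ℕ → ℂ))) (φ z) := hT (esgl j) z hz
    rw [Fval_esgl β j, iteratedDeriv_monomial] at h2
    have h3 : Fval β ((T (esgl j) : ℕ → ℂ)) z
        = ((j.descFactorial m : ℂ) / (β j : ℂ)) * (ψ z * φ z ^ (j - m)) := by
      rw [h2]; ring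
    rw [h3] at h1
    exact h1
  -- column coefficients, cleared of denominators
  have hMQ : ∀ j n, (β j : ℂ) * M n j = (β n : ℂ) * (j.descFactorial m : ℂ) * bc (j - m) n := by
    intro j n
    have hu : (fun n => M n j / (β n : ℂ))
        = fun n => ((j.descFactorial m : ℂ) / (β j : ℂ)) * bc (j - m) n := by
      refine unique_coeff (hcol j) (fun z hz => ?_)
      have h4 := (taylor_hasSum (hdiffk (j - m)) hz).mul_left ((j.descFactorial m : ℂ) / (β j : ℂ))
      convert h4 using 1
      rfl
      funext n
      show ((j.descFactorial m : ℂ) / (β j : ℂ)) * bc (j - m) n * z ^ n = _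
      ring
    have h5 := congrFun hu n
    rw [div_eq_iff (hβc n)] at h5
    rw [h5]
    field_simp [hβc j]
  -- rows below m vanish
  have hlow : ∀ k n, n < m → bc k n = 0 := by
    intro k n hn
    have h1 : M (m+k) n = 0 := by
      have h2 := hMQ n (m+k)
      have h3 : ((n.descFactorial m : ℕ) : ℂ) = 0 := by
        rw [Nat.cast_eq_zero, Nat.descFactorial_eq_zero_iff_lt]; exact hn
      rw [h3] at h2
      have := hβc n
      calc M (m+k) n = ((β n : ℂ) * M (m+k) n) / (β n : ℂ) := by field_simp
        _ = 0 := by rw [h2]; ring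
    have h4 := hMat n (m+k)
    rw [h1, mul_zero] at h4
    have h5 := hMQ (m+k) n
    rw [Nat.add_sub_cancel_left] at h5
    have h6 : w^n ≠ 0 := pow_ne_zero _ hw0
    have h7 : M n (m+k) = 0 := by
      rcases mul_eq_zero.mp h4 with h | h
      · exact absurd h h6
      · exact h
    rw [h7, mul_zero] at h5
    rcases mul_eq_zero.mp h5.symm with h | h
    · rcases mul_eq_zero.mp h with h' | h'
      · exact absurd h' (hβc n)
      · exact absurd h' (hdc k)
    · exact h
  -- product recursion for coefficients
  have hrec : ∀ k n, bc (k+1) n = ∑ i ∈ range (n+1), bc k i * fc (n - i) := by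
    intro k n
    have hfun : (fun z => ψ z * φ z ^ (k+1)) = (fun z => (ψ z * φ z ^ k) * φ z) := by
      funext z; ring
    have h1 : bc (k+1) = acoef (fun z => (ψ z * φ z ^ k) * φ z) := by
      rw [hbc]; exact congrArg acoef hfun
    have h2 := acoef_mul (hdiffk k) hφd
    rw [h1]
    have h3 := congrFun h2 n
    exact h3
  have hfc0 : fc 0 = φ 0 := by
    rw [hfc]; unfold acoef; simp [iteratedDeriv_zero]
  have hfc1 : fc 1 = deriv φ 0 := by
    rw [hfc]; unfold acoef; simp [iteratedDeriv_one]
  have hb0 : bc 0 = acoef ψ := by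
    have : (fun z => ψ z * φ z ^ 0) = ψ := by funext z; simp
    rw [hbc]
    show acoef (fun z => ψ z * φ z ^ 0) = acoef ψ
    rw [this]
  -- coefficient m of ψ φ^k
  have hDm : ∀ k, bc k m = bc 0 m * (φ 0) ^ k := by
    intro k
    induction k with
    | zero => simp
    | succ k ih =>
      rw [hrec k m, Finset.sum_range_succ]
      have h1 : ∑ i ∈ range m, bc k i * fc (m - i) = 0 :=
        Finset.sum_eq_zero fun i hi => by rw [hlow k i (Finset.mem_range.mp hi), zero_mul]
      rw [h1, zero_add, Nat.sub_self, hfc0, ih]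
      ring
  -- ###### symmetry toolkit: statements of the form  conj X * w^t = w^u * X ######
  have hone : ∀ a : ℕ, w^a * (conj w)^a = 1 := fun a => by
    rw [← mul_pow, hww, one_pow]
  have hcw : conj w = w⁻¹ := eq_inv_of_mul_eq_one_left (by rw [mul_comm] at hww; exact hww)
  have symAdd : ∀ {t u : ℕ} {X Y : ℂ}, (conj X * w^t = w^u * X) → (conj Y * w^t = w^u * Y) →
      (conj (X + Y) * w^t = w^u * (X + Y)) := by
    intro t u X Y h1 h2
    rw [map_add]
    linear_combination h1 + h2
  have symSub : ∀ {t u : ℕ} {X Y : ℂ}, (conj (X + Y) * w^t = w^u * (X + Y)) →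
      (conj Y * w^t = w^u * Y) → (conj X * w^t = w^u * X) := by
    intro t u X Y h1 h2
    rw [map_add] at h1
    linear_combination h1 - h2
  have symMul : ∀ {t u t' u' : ℕ} {X Y : ℂ}, (conj X * w^t = w^u * X) →
      (conj Y * w^t' = w^u' * Y) → (conj (X * Y) * w^(t+t') = w^(u+u') * (X * Y)) := by
    intro t u t' u' X Y h1 h2
    have h3 : (conj X * w^t) * (conj Y * w^t') = (w^u * X) * (w^u' * Y) := by rw [h1, h2]
    rw [map_mul]
    linear_combination h3
  have symShift : ∀ {t u t' u' : ℕ} {X : ℂ}, (conj X * w^t = w^u * X) → t + u' = u + t' →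
      (conj X * w^t' = w^u' * X) := by
    intro t u t' u' X h he
    have hp : w^(u+t') = w^(t+u') := by rw [he]
    have hq : (conj X * w^t') * w^t = (w^u' * X) * w^t := by
      linear_combination (w^t') * h + X * hp
    exact mul_right_cancel₀ (pow_ne_zero _ hw0) hq
  have symDiv : ∀ {t u t' u' : ℕ} {X Y : ℂ}, X ≠ 0 → (conj (X * Y) * w^t = w^u * (X * Y)) →
      (conj X * w^t' = w^u' * X) → (conj Y * w^(t+u') = w^(u+t') * Y) := by
    intro t u t' u' X Y hX0 h1 h2
    rw [map_mul] at h1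
    have hq : X * (conj Y * w^(t+u')) = X * (w^(u+t') * Y) := by
      linear_combination (w^t') * h1 - (conj Y * w^t) * h2
    exact mul_left_cancel₀ hX0 hq
  have symEqn : ∀ {t u : ℕ} {A B X Y : ℂ}, (A * X = B * Y) → conj A = A → conj B = B →
      B ≠ 0 → (conj X * w^t = w^u * X) → (conj Y * w^t = w^u * Y) := by
    intro t u A B X Y hE hA hB hBne hX
    have hEc := congrArg (starRingEnd ℂ) hE
    rw [map_mul, map_mul, hA, hB] at hEc
    have hq : B * (conj Y * w^t) = B * (w^u * Y) := by
      linear_combination (-(w^t)) * hEc + A * hX + (w^u) * hE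
    exact mul_left_cancel₀ hBne hq
  have symW : ∀ a : ℕ, conj (w^a) * w^(2*a) = w^0 * w^a := by
    intro a
    rw [map_pow, pow_zero, one_mul]
    have h := hone a
    linear_combination (w^a) * (by rw [mul_comm] at h; exact h : (conj w)^a * w^a = 1)
  have symSum : ∀ {t u : ℕ} (s : Finset ℕ) (f : ℕ → ℂ),
      (∀ i ∈ s, conj (f i) * w^t = w^u * f i) →
      (conj (∑ i ∈ s, f i) * w^t = w^u * ∑ i ∈ s, f i) := by
    intro t u s f h
    rw [map_sum, Finset.sum_mul, Finset.mul_sum]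
    exact Finset.sum_congr rfl h
  have symConjPow : ∀ {t u : ℕ} {X : ℂ}, (conj X * w^t = w^u * X) →
      conj X * (conj w)^u = (conj w)^t * X := by
    intro t u X h
    linear_combination ((conj w)^t * (conj w)^u) * h - (conj X * (conj w)^u) * hone t
      + ((conj w)^t * X) * hone u
  -- sym facts for basic constants
  set φ0 : ℂ := φ 0 with hφ0def
  set bm : ℂ := bc 0 m with hbmdef
  have hbmc : conj bm = bm := by
    rw [hbmdef, hbc]
    show conj (acoef (fun z => ψ z * φ z ^ 0) m) = acoef (fun z => ψ z * φ z ^ 0) m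
    have h1 : (fun z => ψ z * φ z ^ 0) = ψ := by funext z; simp
    rw [h1]
    unfold acoef
    rw [map_mul, map_inv₀, map_natCast]
    congr 1
    exact Complex.conj_eq_iff_im.mpr hψm
  have hf1c : conj (fc 1) = fc 1 := by
    rw [hfc]
    unfold acoef
    rw [map_mul, map_inv₀, map_natCast, iteratedDeriv_one]
    congr 1
    exact Complex.conj_eq_iff_im.mpr hφ'
  have hφ0s : conj φ0 * w^1 = w^0 * φ0 := by
    rw [hφ0def, hφ0, pow_one, pow_zero, one_mul, mul_comm (conj w) (φ 0), mul_assoc,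
      mul_comm (conj w) w, hww, mul_one]
  have symPhiPow : ∀ l : ℕ, conj (φ0^l) * w^l = w^0 * φ0^l := by
    intro l
    induction l with
    | zero => simp
    | succ l ih =>
      have h := symMul ih hφ0s
      rw [← pow_succ] at h
      exact symShift h (by omega)
  -- the fundamental relation (A_l)
  have hA : ∀ l, ((β (m+l) : ℂ)^2 * (m.factorial : ℂ)) * (w^(m+l) * bc 0 (m+l))
      = ((β m : ℂ)^2 * ((m+l).descFactorial m : ℂ)) * (w^m * (bm * φ0^l)) := by
    intro l
    have e1 := hMQ m (m+l)
    rw [Nat.sub_self, Nat.descFactorial_self] at e1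
    have e2 := hMQ (m+l) m
    rw [Nat.add_sub_cancel_left, hDm l] at e2
    have e3 := hMat (m+l) m
    linear_combination (-((β (m+l):ℂ) * w^(m+l))) * e1 + ((β m:ℂ) * w^m) * e2
      + ((β m:ℂ) * (β (m+l):ℂ)) * e3
  -- (R0)
  have hconst1 : ∀ l : ℕ, conj ((β (m+l) : ℂ)^2 * (m.factorial : ℂ))
      = (β (m+l) : ℂ)^2 * (m.factorial : ℂ) := by
    intro l; rw [map_mul, map_pow, Complex.conj_ofReal, map_natCast]
  have hconst2 : ∀ l : ℕ, conj ((β m : ℂ)^2 * ((m+l).descFactorial m : ℂ))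
      = (β m : ℂ)^2 * ((m+l).descFactorial m : ℂ) := by
    intro l; rw [map_mul, map_pow, Complex.conj_ofReal, map_natCast]
  have hc1ne : ∀ l : ℕ, ((β (m+l) : ℂ)^2 * (m.factorial : ℂ)) ≠ 0 := fun l =>
    mul_ne_zero (pow_ne_zero _ (hβc _)) (Nat.cast_ne_zero.mpr (Nat.factorial_ne_zero m))
  have hc2ne : ∀ l : ℕ, ((β m : ℂ)^2 * ((m+l).descFactorial m : ℂ)) ≠ 0 := fun l =>
    mul_ne_zero (pow_ne_zero _ (hβc _)) (hdc l)
  have hR0 : ∀ n, conj (bc 0 n) * w^m = w^n * bc 0 n := by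
    intro n
    rcases Nat.lt_or_ge n m with h | h
    · rw [hlow 0 n h]; simp
    · obtain ⟨l, rfl⟩ : ∃ l, n = m + l := ⟨n - m, by omega⟩
      -- Sym of RHS inner: w^m * (bm * φ0^l)
      have s1 : conj bm * w^0 = w^0 * bm := by rw [hbmc]; ring
      have s2 := symMul s1 (symPhiPow l)
      have s3 := symMul (symW m) s2
      -- s3 : Sym (2m + (0 + l)) (0 + (0 + 0)) (w^m * (bm*φ0^l))
      have s4 := symEqn (hA l).symm (hconst2 l) (hconst1 l) (hc1ne l) s3
      -- s4 : Sym _ _ (w^(m+l) * bc 0 (m+l))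
      have s5 := symDiv (pow_ne_zero (m+l) hw0) s4 (symW (m+l))
      exact symShift s5 (by omega)
  have hbmne : bm ≠ 0 := by
    intro h0
    have hzero : ∀ n, bc 0 n = 0 := by
      intro n
      rcases Nat.lt_or_ge n m with h | h
      · exact hlow 0 n h
      · obtain ⟨l, rfl⟩ : ∃ l, n = m + l := ⟨n - m, by omega⟩
        have e := hA l
        rw [h0, zero_mul, mul_zero, mul_zero] at e
        rcases mul_eq_zero.mp e with h1 | h1
        · exact absurd h1 (hc1ne l)
        · rcases mul_eq_zero.mp h1 with h2 | h2
          · exact absurd h2 (pow_ne_zero _ hw0)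
          · exact h2
    obtain ⟨z, hz, hψz⟩ := hψ0
    have ht := taylor_hasSum hψd hz
    rw [← hb0] at ht
    have hfun0 : (fun n => bc 0 n * z^n) = (fun _ => (0:ℂ)) :=
      funext fun n => by rw [hzero n, zero_mul]
    rw [hfun0] at ht
    exact hψz (ht.unique hasSum_zero)
  -- recursion for the (m+1)-st coefficient
  have hBrec : ∀ k, bc (k+1) (m+1) = bm * φ0^k * fc 1 + bc k (m+1) * φ0 := by
    intro k
    rw [hrec k (m+1)]
    rw [Finset.sum_range_succ, Finset.sum_range_succ]
    have h1 : ∑ i ∈ range m, bc k i * fc (m+1 - i) = 0 :=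
      Finset.sum_eq_zero fun i hi => by rw [hlow k i (Finset.mem_range.mp hi), zero_mul]
    rw [h1, zero_add, show m + 1 - m = 1 from by omega, show m + 1 - (m+1) = 0 from by omega,
      hDm k, hfc0]
    try rw [← hbmdef, ← hφ0def]
    try ring
  -- symmetry of the (m+1)-st coefficients
  have hCB : ∀ k, conj (bc k (m+1)) * w^k = w^1 * bc k (m+1) := by
    intro k
    induction k with
    | zero => exact symShift (hR0 (m+1)) (by omega)
    | succ k ih =>
      rw [hBrec k]
      have s1 : conj bm * w^0 = w^0 * bm := by rw [hbmc]; ring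
      have sf1 : conj (fc 1) * w^0 = w^0 * fc 1 := by rw [hf1c]; ring
      have t1 := symMul (symMul s1 (symPhiPow k)) sf1
      have t2 := symMul ih hφ0s
      exact symAdd (symShift t1 (by omega)) (symShift t2 (by omega))
  -- expansion of bc 1 (m+k)
  have hP2 : ∀ k, bc 1 (m+k) = ∑ l ∈ range (k+1), bc 0 (m+l) * fc (k - l) := by
    intro k
    rw [hrec 0 (m+k)]
    have h1 : ∑ i ∈ range (m+k+1), bc 0 i * fc (m+k-i)
        = ∑ i ∈ Finset.Ico m (m+k+1), bc 0 i * fc (m+k-i) := by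
      refine (Finset.sum_subset (fun x hx => ?_) (fun x hx hnx => ?_)).symm
      · simp only [Finset.mem_Ico] at hx
        simp only [Finset.mem_range]
        omega
      · simp only [Finset.mem_range] at hx
        simp only [Finset.mem_Ico, not_and, not_le] at hnx
        rw [hlow 0 x (by omega), zero_mul]
    rw [h1, Finset.sum_Ico_eq_sum_range, show m+k+1-m = k+1 from by omega]
    refine Finset.sum_congr rfl fun l hl => ?_
    rw [show m+k - (m+l) = k - l from by omega]
  -- the (P3) matrix relation
  have hP3 : ∀ k, ((β (m+1):ℂ)^2 * ((m+k).descFactorial m : ℂ)) * (w^(m+1) * bc k (m+1))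
      = ((β (m+k):ℂ)^2 * ((m+1).descFactorial m : ℂ)) * (w^(m+k) * bc 1 (m+k)) := by
    intro k
    have e1 := hMQ (m+k) (m+1)
    rw [Nat.add_sub_cancel_left] at e1
    have e2 := hMQ (m+1) (m+k)
    rw [Nat.add_sub_cancel_left] at e2
    have e3 := hMat (m+1) (m+k)
    linear_combination (-((β (m+1):ℂ) * w^(m+1))) * e1 + ((β (m+k):ℂ) * w^(m+k)) * e2
      + ((β (m+1):ℂ) * (β (m+k):ℂ)) * e3
  have hconst3 : ∀ k : ℕ, conj ((β (m+1) : ℂ)^2 * ((m+k).descFactorial m : ℂ))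
      = (β (m+1) : ℂ)^2 * ((m+k).descFactorial m : ℂ) := by
    intro k; rw [map_mul, map_pow, Complex.conj_ofReal, map_natCast]
  have hconst4 : ∀ k : ℕ, conj ((β (m+k) : ℂ)^2 * ((m+1).descFactorial m : ℂ))
      = (β (m+k) : ℂ)^2 * ((m+1).descFactorial m : ℂ) := by
    intro k; rw [map_mul, map_pow, Complex.conj_ofReal, map_natCast]
  have hc4ne : ∀ k : ℕ, ((β (m+k) : ℂ)^2 * ((m+1).descFactorial m : ℂ)) ≠ 0 := fun k =>
    mul_ne_zero (pow_ne_zero _ (hβc _)) (hdc 1)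
  -- symmetry of bc 1 (m+k)
  have hCC : ∀ k, conj (bc 1 (m+k)) * w^(m+1) = w^(m+k) * bc 1 (m+k) := by
    intro k
    have s3 := symMul (symW (m+1)) (hCB k)
    have s4 := symEqn (hP3 k) (hconst3 k) (hconst4 k) (hc4ne k) s3
    have s5 := symDiv (pow_ne_zero (m+k) hw0) s4 (symW (m+k))
    exact symShift s5 (by omega)
  -- (R1): symmetry of the coefficients of φ
  have hR1 : ∀ k, conj (fc k) * w^1 = w^k * fc k := by
    intro k
    induction k using Nat.strong_induction_on with
    | _ k ih =>
      have hsplit : bc 1 (m+k) = bm * fc k + ∑ l ∈ range k, bc 0 (m+(l+1)) * fc (k - (l+1)) := by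
        rw [hP2 k, Finset.sum_range_succ']
        rw [Nat.add_zero, Nat.sub_zero, ← hbmdef, add_comm]
      have hterm : ∀ l ∈ range k, conj (bc 0 (m+(l+1)) * fc (k-(l+1))) * w^(m+1)
          = w^(m+k) * (bc 0 (m+(l+1)) * fc (k-(l+1))) := by
        intro l hl
        rw [Finset.mem_range] at hl
        have h1 := hR0 (m+(l+1))
        have h2 := ih (k-(l+1)) (by omega)
        have h3 := symMul h1 h2
        exact symShift h3 (by omega)
      have hsum := symSum (range k) _ hterm
      have hcc := hCC k
      rw [hsplit] at hcc
      have h4 := symSub hcc hsum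
      have s1 : conj bm * w^0 = w^0 * bm := by rw [hbmc]; ring
      have h5 := symDiv hbmne h4 s1
      exact symShift h5 (by omega)
  -- (Rk): symmetry of all coefficient arrays
  have hRk : ∀ k n, conj (bc k n) * w^(m+k) = w^n * bc k n := by
    intro k
    induction k with
    | zero => intro n; exact symShift (hR0 n) (by omega)
    | succ k ih =>
      intro n
      rw [hrec k n]
      refine symSum _ _ fun i hi => ?_
      rw [Finset.mem_range] at hi
      have h1 := symMul (ih i) (hR1 (n - i))
      exact symShift h1 (by omega)
  -- conjugate-symmetry of the matrix
  have hMconj : ∀ n j, conj (M j n) = M n j := by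
    intro n j
    rcases Nat.lt_or_ge n m with h | h
    · have h1 : M j n = 0 := by
        have h2 := hMQ n j
        rw [show ((n.descFactorial m : ℕ):ℂ) = 0 from by
          rw [Nat.cast_eq_zero, Nat.descFactorial_eq_zero_iff_lt]; exact h] at h2
        have h3 : (β n : ℂ) * M j n = 0 := by rw [h2]; ring
        rcases mul_eq_zero.mp h3 with h4 | h4
        · exact absurd h4 (hβc n)
        · exact h4
      have h5 : M n j = 0 := by
        rcases Nat.lt_or_ge j m with hj | hj
        · have h2 := hMQ j n
          rw [show ((j.descFactorial m : ℕ):ℂ) = 0 from by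
            rw [Nat.cast_eq_zero, Nat.descFactorial_eq_zero_iff_lt]; exact hj] at h2
          have h3 : (β j : ℂ) * M n j = 0 := by rw [h2]; ring
          rcases mul_eq_zero.mp h3 with h4 | h4
          · exact absurd h4 (hβc j)
          · exact h4
        · have h2 := hMQ j n
          rw [hlow (j-m) n h] at h2
          have h3 : (β j : ℂ) * M n j = 0 := by rw [h2]; ring
          rcases mul_eq_zero.mp h3 with h4 | h4
          · exact absurd h4 (hβc j)
          · exact h4
      rw [h1, h5, map_zero]
    · have hkb := symShift (hRk (n-m) j) (by omega : (m+(n-m)) + j = j + n)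
      have h2 := hMQ n j
      have h2c := congrArg (starRingEnd ℂ) h2
      simp only [map_mul, Complex.conj_ofReal, map_natCast] at h2c
      have h3 := hMat n j
      have hne : (β n : ℂ) * w^n ≠ 0 := mul_ne_zero (hβc n) (pow_ne_zero _ hw0)
      apply mul_left_cancel₀ hne
      linear_combination (w^n) * h2c + ((β j:ℂ) * ((n.descFactorial m : ℕ):ℂ)) * hkb
        - (β n:ℂ) * h3 - (w^j) * h2
  -- the three conclusions
  have hwn : ‖w‖ = 1 := by exact hw
  refine ⟨?_, ?_, ?_⟩
  · -- ψ symmetry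
    intro z hz
    have hz' : w * conj z ∈ ball (0:ℂ) 1 := by
      rw [mem_ball_zero_iff] at hz ⊢
      rw [norm_mul, hwn, one_mul]
      rw [Complex.norm_conj]
      exact hz
    have h1 := taylor_hasSum hψd hz'
    rw [← hb0] at h1
    have h2 := h1.map (starRingEnd ℂ) Complex.continuous_conj
    have h3 : ((starRingEnd ℂ) ∘ fun n => bc 0 n * (w * conj z)^n)
        = fun n => (conj w)^m * (bc 0 n * z^n) := by
      funext n
      simp only [Function.comp_apply, map_mul, map_pow, Complex.conj_conj]
      have h4 := symConjPow (hR0 n)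
      calc conj (bc 0 n) * (conj w * z)^n = (conj (bc 0 n) * (conj w)^n) * z^n := by
            rw [mul_pow]; ring
        _ = ((conj w)^m * bc 0 n) * z^n := by rw [h4]
        _ = (conj w)^m * (bc 0 n * z^n) := by ring
    rw [h3] at h2
    have h5 := (taylor_hasSum hψd hz).mul_left ((conj w)^m)
    rw [← hb0] at h5
    exact h2.unique h5
  · -- φ symmetry
    intro z hz
    have hz' : w * conj z ∈ ball (0:ℂ) 1 := by
      rw [mem_ball_zero_iff] at hz ⊢
      rw [norm_mul, hwn, one_mul]
      rw [Complex.norm_conj]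
      exact hz
    have h1 := taylor_hasSum hφd hz'
    rw [← hfc] at h1
    have h2 := h1.map (starRingEnd ℂ) Complex.continuous_conj
    have h3 : ((starRingEnd ℂ) ∘ fun n => fc n * (w * conj z)^n)
        = fun n => conj w * (fc n * z^n) := by
      funext n
      simp only [Function.comp_apply, map_mul, map_pow, Complex.conj_conj]
      have h4 := symConjPow (hR1 n)
      rw [pow_one] at h4
      calc conj (fc n) * (conj w * z)^n = (conj (fc n) * (conj w)^n) * z^n := by
            rw [mul_pow]; ring
        _ = (conj w * fc n) * z^n := by rw [h4]
        _ = conj w * (fc n * z^n) := by ring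
    rw [h3] at h2
    have h5 := (taylor_hasSum hφd hz).mul_left (conj w)
    rw [← hfc] at h5
    exact h2.unique h5
  · -- Hermitian
    have hTcol : ∀ j, S (esgl j) = T (esgl j) := by
      intro j
      apply lp.ext
      funext n
      rw [hSe j n]
      exact hMconj n j
    ext x n
    have h1 : ((S x) : ℕ → ℂ) n = ⟪esgl n, S x⟫_ℂ := (inner_esgl_left n (S x)).symm
    rw [h1, hS, ContinuousLinearMap.adjoint_inner_right, ← hTcol n, hS,
      ContinuousLinearMap.adjoint_inner_left, inner_esgl_left]
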